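/- arXiv:1507.00600 — 11 statements merged into one kernel-verified Lean document; each statement's English description precedes it below -/
import Mathlib

section
/- Let τ be a binary relation on words over an alphabet Σ, fix a language M, and let L ⊆ M be a τ-independent language. Then for every i ≥ 1, the language μ^i(L) is τ-independent and L ⊆ μ^i(L) ⊆ μ^{i+1}(L) ⊆ ind(L). -/
open Set

/-- Image of a language under a binary word relation: τ(X) = {y | ∃ x ∈ X, τ(x,y)}. -/
def img {α : Type*} (τ : List α → List α → Prop) (X : Set (List α)) : Set (List α) :=
  {y | ∃ x ∈ X, τ x y}

/-- Inverse image: τ⁻¹(X) = {y | ∃ x ∈ X, τ(y,x)}. -/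
def pre {α : Type*} (τ : List α → List α → Prop) (X : Set (List α)) : Set (List α) :=
  {y | ∃ x ∈ X, τ y x}

/-- ind(X) = M \ (τ(X) ∪ τ⁻¹(X)). -/
def ind {α : Type*} (τ : List α → List α → Prop) (M X : Set (List α)) : Set (List α) :=
  M \ (img τ X ∪ pre τ X)

/-- The max-min operator μ(X) = ind(X) \ τ⁻¹(ind(X)). -/
def mu {α : Type*} (τ : List α → List α → Prop) (M X : Set (List α)) : Set (List α) :=
  ind τ M X \ pre τ (ind τ M X)

/-- σ_X(A) = τ⁻¹(A) ∩ ind(X). -/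
def sig {α : Type*} (τ : List α → List α → Prop) (M X A : Set (List α)) : Set (List α) :=
  pre τ A ∩ ind τ M X

/-- Φ^*(A) = ⋃_{i≥0} Φ^i(A). -/
def opStar {α : Type*} (Φ : Set (List α) → Set (List α)) (A : Set (List α)) : Set (List α) :=
  ⋃ i : ℕ, Φ^[i] A

/-- Φ^+(A) = ⋃_{i≥1} Φ^i(A). -/
def opPlus {α : Type*} (Φ : Set (List α) → Set (List α)) (A : Set (List α)) : Set (List α) :=
  ⋃ i ≥ 1, Φ^[i] A

/-- Φ^∩(A) = ⋂_{i≥1} Φ^i(A). -/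
def opInter {α : Type*} (Φ : Set (List α) → Set (List α)) (A : Set (List α)) : Set (List α) :=
  ⋂ i ≥ 1, Φ^[i] A

/-- Φ^{≥k}(A) = ⋃_{i≥k} Φ^i(A). -/
def opGe {α : Type*} (Φ : Set (List α) → Set (List α)) (k : ℕ) (A : Set (List α)) : Set (List α) :=
  ⋃ i ≥ k, Φ^[i] A

/-- A language is τ-independent if τ(L) ∩ L = ∅. -/
def indep {α : Type*} (τ : List α → List α → Prop) (L : Set (List α)) : Prop :=
  img τ L ∩ L = ∅

/-- τ is smooth (relative to M) if σ_X^∩(ind(X)) ⊆ σ_X^*(μ(X)) for every language X. -/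
def smooth {α : Type*} (τ : List α → List α → Prop) (M : Set (List α)) : Prop :=
  ∀ X : Set (List α), opInter (sig τ M X) (ind τ M X) ⊆ opStar (sig τ M X) (mu τ M X)

/-- L is P_τ-maximal relative to M: L ⊆ M, L is τ-independent, and no word of M \ L
can be added to L keeping τ-independence. -/
def maximalIndep {α : Type*} (τ : List α → List α → Prop) (M L : Set (List α)) : Prop :=
  L ⊆ M ∧ indep τ L ∧ ∀ w ∈ M \ L, ¬ indep τ (L ∪ {w})

lemma indep_mem {α : Type*} {τ : List α → List α → Prop} {X : Set (List α)}
    (h : indep τ X) {y : List α} (hy : y ∈ img τ X) (hy2 : y ∈ X) : False := by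
  have : y ∈ img τ X ∩ X := ⟨hy, hy2⟩
  rw [h] at this; exact this

lemma subset_mu {α : Type*} {τ : List α → List α → Prop} {M X : Set (List α)}
    (hXM : X ⊆ M) (hX : indep τ X) : X ⊆ mu τ M X := by
  have hind : X ⊆ ind τ M X := by
    intro x hx
    refine ⟨hXM hx, ?_⟩
    rintro (⟨a, ha, hτ⟩ | ⟨a, ha, hτ⟩)
    · exact indep_mem hX ⟨a, ha, hτ⟩ hx
    · exact indep_mem hX ⟨x, hx, hτ⟩ ha
  intro x hx
  refine ⟨hind hx, ?_⟩
  rintro ⟨a, ha, hτ⟩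
  exact ha.2 (Or.inl ⟨x, hx, hτ⟩)

lemma indep_mu {α : Type*} (τ : List α → List α → Prop) (M X : Set (List α)) :
    indep τ (mu τ M X) := by
  ext y
  simp only [Set.mem_inter_iff, Set.mem_empty_iff_false, iff_false, not_and]
  rintro ⟨x, hx, hτ⟩ hy
  exact hx.2 ⟨y, hy.1, hτ⟩

lemma ind_antitone {α : Type*} (τ : List α → List α → Prop) (M : Set (List α))
    {X Y : Set (List α)} (h : X ⊆ Y) : ind τ M Y ⊆ ind τ M X := by
  intro z hz
  refine ⟨hz.1, ?_⟩
  rintro (⟨a, ha, hτ⟩ | ⟨a, ha, hτ⟩)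
  · exact hz.2 (Or.inl ⟨a, h ha, hτ⟩)
  · exact hz.2 (Or.inr ⟨a, h ha, hτ⟩)

lemma mu_subset_M {α : Type*} (τ : List α → List α → Prop) (M X : Set (List α)) :
    mu τ M X ⊆ M := fun _ h => h.1.1

theorem stmt2 {α : Type*} (τ : List α → List α → Prop) (M L : Set (List α))
    (hLM : L ⊆ M) (hL : indep τ L) :
    ∀ i : ℕ, 1 ≤ i →
      indep τ ((mu τ M)^[i] L) ∧
      L ⊆ (mu τ M)^[i] L ∧
      (mu τ M)^[i] L ⊆ (mu τ M)^[i+1] L ∧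
      (mu τ M)^[i+1] L ⊆ ind τ M L := by
  have key : ∀ i : ℕ, indep τ ((mu τ M)^[i] L) ∧ L ⊆ (mu τ M)^[i] L ∧ (mu τ M)^[i] L ⊆ M := by
    intro i
    induction i with
    | zero => exact ⟨hL, subset_rfl, hLM⟩
    | succ n ih =>
      rw [Function.iterate_succ_apply']
      exact ⟨indep_mu τ M _, ih.2.1.trans (subset_mu ih.2.2 ih.1), mu_subset_M τ M _⟩
  intro i _
  obtain ⟨h1, h2, h3⟩ := key i
  have hstep : (mu τ M)^[i] L ⊆ (mu τ M)^[i+1] L := by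
    rw [Function.iterate_succ_apply']
    exact subset_mu h3 h1
  refine ⟨h1, h2, hstep, ?_⟩
  rw [Function.iterate_succ_apply']
  exact fun x hx => ind_antitone τ M h2 hx.1
end

section
/- Let τ be a binary relation on words over an alphabet Σ and fix a language M. For every language X: ind(X) = σ_X^*(μ(X)) ∪ σ_X^∩(ind(X)). -/
open Set

lemma pre_union' {α : Type*} (τ : List α → List α → Prop) (B C : Set (List α)) :
    pre τ (B ∪ C) = pre τ B ∪ pre τ C := by
  ext y; simp only [pre, Set.mem_setOf_eq, Set.mem_union]; aesop

lemma sig_union' {α : Type*} (τ : List α → List α → Prop) (M X B C : Set (List α)) :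
    sig τ M X (B ∪ C) = sig τ M X B ∪ sig τ M X C := by
  simp [sig, pre_union', Set.union_inter_distrib_right]

lemma sig_iter_union' {α : Type*} (τ : List α → List α → Prop) (M X : Set (List α)) (n : ℕ)
    (B C : Set (List α)) :
    (sig τ M X)^[n] (B ∪ C) = (sig τ M X)^[n] B ∪ (sig τ M X)^[n] C := by
  induction n generalizing B C with
  | zero => simp
  | succ n ih => simp only [Function.iterate_succ_apply, sig_union', ih]

lemma ind_decomp' {α : Type*} (τ : List α → List α → Prop) (M X : Set (List α)) :
    ind τ M X = mu τ M X ∪ sig τ M X (ind τ M X) := by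
  ext w
  simp only [mu, sig, Set.mem_union, Set.mem_diff, Set.mem_inter_iff]
  tauto

lemma key_decomp' {α : Type*} (τ : List α → List α → Prop) (M X : Set (List α)) (n : ℕ) :
    ind τ M X = (⋃ i < n, (sig τ M X)^[i] (mu τ M X)) ∪ (sig τ M X)^[n] (ind τ M X) := by
  induction n with
  | zero => simp
  | succ n ih =>
    conv_lhs => rw [ih]
    rw [show (sig τ M X)^[n] (ind τ M X)
        = (sig τ M X)^[n] (mu τ M X) ∪ (sig τ M X)^[n+1] (ind τ M X) by
      conv_lhs => rw [ind_decomp']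
      rw [sig_iter_union', Function.iterate_succ_apply]]
    rw [Set.biUnion_lt_succ]
    ac_rfl

lemma sig_sub_ind' {α : Type*} (τ : List α → List α → Prop) (M X A : Set (List α)) :
    sig τ M X A ⊆ ind τ M X := Set.inter_subset_right

theorem stmt6 {α : Type*} (τ : List α → List α → Prop) (M : Set (List α))
    (X : Set (List α)) :
    ind τ M X = opStar (sig τ M X) (mu τ M X) ∪ opInter (sig τ M X) (ind τ M X) := by
  apply Set.Subset.antisymm
  · intro w hw
    by_cases h : w ∈ opInter (sig τ M X) (ind τ M X)
    · exact Or.inr h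
    · left
      simp only [opInter, Set.mem_iInter] at h
      push_neg at h
      obtain ⟨n, _, hn⟩ := h
      have := key_decomp' τ M X n
      rw [this] at hw
      rcases hw with hw | hw
      · simp only [Set.mem_iUnion] at hw
        obtain ⟨i, _, hi⟩ := hw
        exact Set.mem_iUnion.mpr ⟨i, hi⟩
      · exact absurd hw hn
  · intro w hw
    rcases hw with hw | hw
    · simp only [opStar, Set.mem_iUnion] at hw
      obtain ⟨i, hi⟩ := hw
      cases i with
      | zero => exact (Set.diff_subset : mu τ M X ⊆ ind τ M X) hi
      | succ i =>
        rw [Function.iterate_succ_apply'] at hi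
        exact sig_sub_ind' τ M X _ hi
    · simp only [opInter, Set.mem_iInter] at hw
      exact sig_sub_ind' τ M X _ ((Function.iterate_one _ ▸ hw 1 le_rfl))
end

section
/- Let τ be a binary relation on words over an alphabet Σ and fix a language M. If a language X satisfies X = μ(X), then ind(X) = X ∪ σ_X^∩(ind(X)). -/
open Set

theorem stmt7 {α : Type*} (τ : List α → List α → Prop) (M : Set (List α))
    (X : Set (List α)) (hX : X = mu τ M X) :
    ind τ M X = X ∪ opInter (sig τ M X) (ind τ M X) := by
  have mono : ∀ A B : Set (List α), A ⊆ B → sig τ M X A ⊆ sig τ M X B := by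
    intro A B hAB w hw
    exact ⟨⟨hw.1.choose, hAB hw.1.choose_spec.1, hw.1.choose_spec.2⟩, hw.2⟩
  -- key: ind X \ X ⊆ sig (ind X \ X)
  have key : ind τ M X \ X ⊆ sig τ M X (ind τ M X \ X) := by
    intro w ⟨hwi, hwx⟩
    have hpre : w ∈ pre τ (ind τ M X) := by
      by_contra h
      exact hwx (hX ▸ ⟨hwi, h⟩)
    obtain ⟨x, hxi, hτ⟩ := hpre
    have hxX : x ∉ X := by
      intro hxX
      exact hwi.2 (Or.inr ⟨x, hxX, hτ⟩)
    exact ⟨⟨x, ⟨hxi, hxX⟩, hτ⟩, hwi⟩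
  have iter : ∀ i : ℕ, ind τ M X \ X ⊆ (sig τ M X)^[i] (ind τ M X \ X) := by
    intro i
    induction i with
    | zero => exact fun w hw => hw
    | succ n ih =>
      rw [Function.iterate_succ_apply']
      exact fun w hw => mono _ _ ih (key hw)
  ext w
  constructor
  · intro hw
    by_cases hwx : w ∈ X
    · exact Or.inl hwx
    · refine Or.inr ?_
      simp only [opInter, mem_iInter]
      intro i hi
      have hmono2 : ∀ i : ℕ, (sig τ M X)^[i] (ind τ M X \ X) ⊆ (sig τ M X)^[i] (ind τ M X) := by
        intro i
        induction i with
        | zero => exact fun _ h => h.1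
        | succ n ih =>
          rw [Function.iterate_succ_apply', Function.iterate_succ_apply']
          exact mono _ _ ih
      exact hmono2 i (iter i ⟨hw, hwx⟩)
  · rintro (hw | hw)
    · rw [hX] at hw; exact hw.1
    · simp only [opInter, mem_iInter] at hw
      exact (hw 1 le_rfl).2
end

section
/- Let τ be a binary relation on words over an alphabet Σ and fix a language M. If the operator A ↦ τ⁻¹(A) is exhaustive, i.e., ⋂_{i≥1} (τ⁻¹)^i(X) = ∅ for every language X, then τ is smooth, i.e., σ_X^∩(ind(X)) ⊆ σ_X^*(μ(X)) for every language X. -/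
open Set

theorem stmt8 {α : Type*} (τ : List α → List α → Prop) (M : Set (List α))
    (hexh : ∀ X : Set (List α), opInter (pre τ) X = ∅) :
    smooth τ M := by
  intro X
  set I := ind τ M X with hI
  set S := opStar (sig τ M X) (mu τ M X) with hS
  have hpre_mono : Monotone (pre τ) := by
    intro A B hAB y hy
    obtain ⟨x, hx, hxy⟩ := hy
    exact ⟨x, hAB hx, hxy⟩
  -- Key: Y := I \ S satisfies Y ⊆ pre τ Y
  set Y := I \ S with hY
  have hstep : Y ⊆ pre τ Y := by
    intro w hw
    obtain ⟨hwI, hwS⟩ := hw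
    -- w ∉ μ since μ = (sig)^[0] μ ⊆ S
    have hwmu : w ∉ mu τ M X := by
      intro h
      exact hwS (mem_iUnion.mpr ⟨0, h⟩)
    -- so w ∈ pre τ I
    have hwpre : w ∈ pre τ I := by
      by_contra h
      exact hwmu ⟨hwI, h⟩
    obtain ⟨v, hvI, hwv⟩ := hwpre
    refine ⟨v, ⟨hvI, ?_⟩, hwv⟩
    intro hvS
    obtain ⟨k, hk⟩ := mem_iUnion.mp hvS
    apply hwS
    apply mem_iUnion.mpr ⟨k + 1, ?_⟩
    rw [Function.iterate_succ_apply']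
    exact ⟨⟨v, hk, hwv⟩, hwI⟩
  -- hence Y ⊆ (pre τ)^[i] Y for all i
  have hiter : ∀ i : ℕ, Y ⊆ (pre τ)^[i] Y := by
    intro i
    induction i with
    | zero => simp
    | succ n ih =>
      calc Y ⊆ pre τ Y := hstep
        _ ⊆ pre τ ((pre τ)^[n] Y) := hpre_mono ih
        _ = (pre τ)^[n + 1] Y := (Function.iterate_succ_apply' _ _ _).symm
  -- so Y ⊆ opInter (pre τ) Y = ∅
  have hYempty : Y = ∅ := by
    have : Y ⊆ opInter (pre τ) Y := by
      intro w hw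
      apply mem_iInter₂.mpr
      intro i _
      exact hiter i hw
    rw [hexh Y] at this
    exact eq_empty_iff_forall_notMem.mpr fun w hw => this hw
  -- hence I ⊆ S
  have hIS : I ⊆ S := by
    intro w hw
    by_contra h
    have : w ∈ Y := ⟨hw, h⟩
    rw [hYempty] at this
    exact this
  -- finally: σ^∩(I) ⊆ σ^[1](I) ⊆ I ⊆ S
  intro w hw
  have h1 : w ∈ (sig τ M X)^[1] I := mem_iInter₂.mp hw 1 le_rfl
  simp only [Function.iterate_one] at h1
  exact hIS h1.2
end

section
/- Let τ be an input-altering binary relation on words over an alphabet Σ, fix a language M, and let L ⊆ M be a τ-independent language. Then L is P_τ-maximal relative to M if and only if ind(L) ⊆ L. -/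
open Set

theorem stmt12 {α : Type*} (τ : List α → List α → Prop) (M L : Set (List α))
    (halt : ∀ w : List α, ¬ τ w w) (hLM : L ⊆ M) (hL : indep τ L) :
    maximalIndep τ M L ↔ ind τ M L ⊆ L := by
  constructor
  · rintro ⟨-, -, hmax⟩ w ⟨hwM, hw⟩
    by_contra hwL
    apply hmax w ⟨hwM, hwL⟩
    ext x
    simp only [indep, Set.mem_inter_iff, Set.mem_empty_iff_false, iff_false]
    rintro ⟨⟨y, hy, hyx⟩, hx⟩
    rcases hy with hy | hy
    · rcases hx with hx | hx
      · have hmem : x ∈ img τ L ∩ L := ⟨⟨y, hy, hyx⟩, hx⟩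
        rw [hL] at hmem; exact hmem
      · exact hw (Or.inl ⟨y, hy, by rwa [Set.mem_singleton_iff.mp hx] at hyx⟩)
    · rcases hx with hx | hx
      · exact hw (Or.inr ⟨x, hx, by rwa [Set.mem_singleton_iff.mp hy] at hyx⟩)
      · exact halt w (by rw [Set.mem_singleton_iff.mp hy, Set.mem_singleton_iff.mp hx] at hyx; exact hyx)
  · intro hind
    refine ⟨hLM, hL, ?_⟩
    rintro w ⟨hwM, hwL⟩ hbad
    have hw : w ∉ ind τ M L := fun h => hwL (hind h)
    have : w ∈ img τ L ∪ pre τ L := by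
      by_contra h; exact hw ⟨hwM, h⟩
    rcases this with ⟨x, hx, hxw⟩ | ⟨x, hx, hwx⟩
    · have : w ∈ img τ (L ∪ {w}) ∩ (L ∪ {w}) := ⟨⟨x, Or.inl hx, hxw⟩, Or.inr rfl⟩
      rw [hbad] at this; exact this
    · have : x ∈ img τ (L ∪ {w}) ∩ (L ∪ {w}) := ⟨⟨w, Or.inr rfl, hwx⟩, Or.inl hx⟩
      rw [hbad] at this; exact this
end

section
/- Let τ be an input-altering binary relation on words over an alphabet Σ, fix a language M, and let L ⊆ M be a τ-independent language that is P_τ-maximal relative to M. Then μ^i(L) = L for all i ≥ 1. -/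
open Set

theorem stmt13 {α : Type*} (τ : List α → List α → Prop) (M L : Set (List α))
    (halt : ∀ w : List α, ¬ τ w w) (hLM : L ⊆ M) (hL : indep τ L)
    (hmax : maximalIndep τ M L) :
    ∀ i : ℕ, 1 ≤ i → (mu τ M)^[i] L = L := by
  have hni : ∀ x ∈ L, ∀ y ∈ L, ¬ τ x y := by
    intro x hx y hy hτ
    have : y ∈ img τ L ∩ L := ⟨⟨x, hx, hτ⟩, hy⟩
    rw [hL] at this; exact this
  have hind : ind τ M L = L := by
    ext w
    constructor
    · rintro ⟨hwM, hw⟩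
      by_contra hwL
      rcases hmax.2.2 w ⟨hwM, hwL⟩ with hni2
      apply hni2
      rw [indep, Set.eq_empty_iff_forall_notMem]
      rintro y ⟨⟨x, hx, hτ⟩, hy⟩
      rcases hx with hx | hx <;> rcases hy with hy | hy
      · exact hni x hx y hy hτ
      · rw [Set.mem_singleton_iff] at hy; subst hy
        exact hw (Or.inl ⟨x, hx, hτ⟩)
      · rw [Set.mem_singleton_iff] at hx; subst hx
        exact hw (Or.inr ⟨y, hy, hτ⟩)
      · rw [Set.mem_singleton_iff] at hx hy; subst hx; subst hy
        exact halt y hτ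
    · intro hwL
      refine ⟨hLM hwL, ?_⟩
      rintro (⟨x, hx, hτ⟩ | ⟨x, hx, hτ⟩)
      · exact hni x hx w hwL hτ
      · exact hni w hwL x hx hτ
  have hmu : mu τ M L = L := by
    rw [mu, hind]
    ext w
    constructor
    · exact fun h => h.1
    · intro hw
      refine ⟨hw, ?_⟩
      rintro ⟨x, hx, hτ⟩
      exact hni w hw x hx hτ
  intro i hi
  induction i with
  | zero => omega
  | succ n ih =>
    rcases Nat.eq_or_lt_of_le hi with h | h
    · simp [← h, hmu]
    · rw [Function.iterate_succ_apply', ih (by omega), hmu]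
end

section
/- Let τ be an input-altering, transitive, and smooth binary relation on words over an alphabet Σ, fix a language M, and let L ⊆ M be a τ-independent language. Then μ(L) is P_τ-maximal relative to M and contains L. -/
open Set

lemma chainB {α : Type*} (τ : List α → List α → Prop) (M L : Set (List α))
    (htr : ∀ x y z : List α, τ x y → τ y z → τ x z) (A : Set (List α)) :
    ∀ n x, x ∈ (sig τ M L)^[n + 1] A → ∃ y ∈ A, τ x y := by
  intro n
  induction n with
  | zero =>
    intro x hx
    rw [Function.iterate_one] at hx
    obtain ⟨⟨y, hy, hxy⟩, _⟩ := hx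
    exact ⟨y, hy, hxy⟩
  | succ n ih =>
    intro x hx
    rw [Function.iterate_succ_apply'] at hx
    obtain ⟨⟨y, hy, hxy⟩, _⟩ := hx
    obtain ⟨z, hz, hyz⟩ := ih y hy
    exact ⟨z, hz, htr _ _ _ hxy hyz⟩

lemma chainA {α : Type*} (τ : List α → List α → Prop) (M L : Set (List α))
    (htr : ∀ x y z : List α, τ x y → τ y z → τ x z) :
    ∀ i x, x ∈ (sig τ M L)^[i] (ind τ M L) → x ∉ (sig τ M L)^[i + 1] (ind τ M L) →
      x ∈ mu τ M L ∨ ∃ y ∈ mu τ M L, τ x y := by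
  intro i
  induction i with
  | zero =>
    intro x hx hnx
    left
    refine ⟨hx, ?_⟩
    intro hpre
    exact hnx (by rw [Function.iterate_one]; exact ⟨hpre, hx⟩)
  | succ i ih =>
    intro x hx hnx
    rw [Function.iterate_succ_apply'] at hx
    obtain ⟨⟨y, hy, hxy⟩, hind⟩ := hx
    have hny : y ∉ (sig τ M L)^[i + 1] (ind τ M L) := by
      intro hy'
      apply hnx
      rw [Function.iterate_succ_apply']
      exact ⟨⟨y, hy', hxy⟩, hind⟩
    rcases ih y hy hny with hmu | ⟨z, hz, hyz⟩
    · exact Or.inr ⟨y, hmu, hxy⟩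
    · exact Or.inr ⟨z, hz, htr _ _ _ hxy hyz⟩

theorem stmt15 {α : Type*} (τ : List α → List α → Prop) (M L : Set (List α))
    (halt : ∀ w : List α, ¬ τ w w)
    (htr : ∀ x y z : List α, τ x y → τ y z → τ x z)
    (hsm : smooth τ M)
    (hLM : L ⊆ M) (hL : indep τ L) :
    maximalIndep τ M (mu τ M L) ∧ L ⊆ mu τ M L := by
  classical
  have hLe := Set.eq_empty_iff_forall_notMem.mp hL
  have hLind : L ⊆ ind τ M L := by
    intro x hx
    refine ⟨hLM hx, ?_⟩
    rintro (⟨y, hy, hyx⟩ | ⟨y, hy, hxy⟩)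
    · exact hLe x ⟨⟨y, hy, hyx⟩, hx⟩
    · exact hLe y ⟨⟨x, hx, hxy⟩, hy⟩
  have hLmu : L ⊆ mu τ M L := by
    intro x hx
    refine ⟨hLind hx, ?_⟩
    rintro ⟨y, hy, hxy⟩
    exact hy.2 (Or.inl ⟨x, hx, hxy⟩)
  refine ⟨⟨fun x hx => hx.1.1, ?_, ?_⟩, hLmu⟩
  · apply Set.eq_empty_iff_forall_notMem.mpr
    rintro y ⟨⟨x, hx, hxy⟩, hymu⟩
    exact hx.2 ⟨y, hymu.1, hxy⟩
  · rintro w ⟨hwM, hwmu⟩ hcon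
    have hce := Set.eq_empty_iff_forall_notMem.mp hcon
    -- It suffices to find a τ-connection between w and μ(L)
    have key : (∃ y ∈ mu τ M L, τ w y) ∨ (∃ x ∈ mu τ M L, τ x w) → False := by
      rintro (⟨y, hy, hwy⟩ | ⟨x, hx, hxw⟩)
      · exact hce y ⟨⟨w, Or.inr rfl, hwy⟩, Or.inl hy⟩
      · exact hce w ⟨⟨x, Or.inl hx, hxw⟩, Or.inr rfl⟩
    apply key
    by_cases hwind : w ∈ ind τ M L
    · -- w ∈ ind(L) \ μ(L), so w ∈ τ⁻¹(ind(L))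
      have hwpre : w ∈ pre τ (ind τ M L) := by
        by_contra h
        exact hwmu ⟨hwind, h⟩
      left
      by_cases hall : ∀ i, w ∈ (sig τ M L)^[i] (ind τ M L)
      · have hop : w ∈ opInter (sig τ M L) (ind τ M L) := by
          simp only [opInter, Set.mem_iInter]
          intro i _
          exact hall i
        have hstar := hsm L hop
        simp only [opStar, Set.mem_iUnion] at hstar
        obtain ⟨i, hi⟩ := hstar
        cases i with
        | zero => exact absurd hi hwmu
        | succ n => exact chainB τ M L htr (mu τ M L) n w hi
      · push_neg at hall
        have hm := Nat.find_spec hall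
        have hm0 : Nat.find hall ≠ 0 := by
          intro h
          rw [h] at hm
          exact hm hwind
        obtain ⟨k, hk⟩ := Nat.exists_eq_succ_of_ne_zero hm0
        have hwk : w ∈ (sig τ M L)^[k] (ind τ M L) :=
          not_not.mp (Nat.find_min hall (by omega))
        have hwk1 : w ∉ (sig τ M L)^[k + 1] (ind τ M L) := by rw [hk] at hm; exact hm
        rcases chainA τ M L htr k w hwk hwk1 with hmu | hy
        · exact absurd hmu hwmu
        · exact hy
    · -- w ∉ ind(L): w is related to some word of L ⊆ μ(L)
      have : w ∈ img τ L ∪ pre τ L := by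
        by_contra h
        exact hwind ⟨hwM, h⟩
      rcases this with ⟨x, hx, hxw⟩ | ⟨y, hy, hwy⟩
      · exact Or.inr ⟨x, hLmu hx, hxw⟩
      · exact Or.inl ⟨y, hLmu hy, hwy⟩
end

section
/- Fix a linear order ≺ on the set of words over an alphabet Σ such that for every word w the set {v | v ≺ w} is finite, and let τ be a binary relation on words that is input-decreasing with respect to ≺. Then: (i) τ is input-altering; (ii) for every word x the set {y | τ(x,y)} is finite; (iii) the operator A ↦ τ⁻¹(A) is exhaustive, i.e., ⋂_{i≥1} (τ⁻¹)^i(X) = ∅ for every language X; and (iv) τ is smooth. -/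
open Set

lemma chainBound {α : Type*} (ord : LinearOrder (List α))
    (hfin : ∀ w : List α, {v : List α | ord.lt v w}.Finite)
    (τ : List α → List α → Prop)
    (hdec : ∀ x y : List α, τ x y → ord.lt y x) :
    ∀ (i : ℕ) (A : Set (List α)) (w : List α),
      w ∈ (pre τ)^[i] A → i ≤ (hfin w).toFinset.card := by
  intro i
  induction i with
  | zero => intro A w _; exact Nat.zero_le _
  | succ n ih =>
    intro A w hw
    rw [Function.iterate_succ_apply'] at hw
    obtain ⟨x, hx, hτ⟩ := hw
    have hxw : ord.lt x w := hdec w x hτ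
    have hn : n ≤ (hfin x).toFinset.card := ih A x hx
    have hss : {v : List α | ord.lt v x} ⊂ {v : List α | ord.lt v w} := by
      constructor
      · intro v hv; exact @lt_trans _ ord.toPreorder _ _ _ hv hxw
      · intro hsub
        exact absurd (hsub hxw) (@lt_irrefl _ ord.toPreorder x)
    have hcard : (hfin x).toFinset.card < (hfin w).toFinset.card := by
      apply Finset.card_lt_card
      rwa [Set.Finite.toFinset_ssubset_toFinset]
    omega

theorem stmt16 {α : Type*} (ord : LinearOrder (List α))
    (hfin : ∀ w : List α, {v : List α | ord.lt v w}.Finite)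
    (τ : List α → List α → Prop)
    (hdec : ∀ x y : List α, τ x y → ord.lt y x)
    (M : Set (List α)) :
    (∀ w : List α, ¬ τ w w) ∧
    (∀ x : List α, {y : List α | τ x y}.Finite) ∧
    (∀ X : Set (List α), opInter (pre τ) X = ∅) ∧
    smooth τ M := by
  have hpre_mono : ∀ (A B : Set (List α)), A ⊆ B → pre τ A ⊆ pre τ B := by
    intro A B hAB y ⟨x, hx, hτ⟩; exact ⟨x, hAB hx, hτ⟩
  have hempty : ∀ X : Set (List α), opInter (pre τ) X = ∅ := by
    intro X
    ext w
    simp only [opInter, Set.mem_iInter, Set.mem_empty_iff_false, iff_false]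
    intro hw
    have h := chainBound ord hfin τ hdec ((hfin w).toFinset.card + 1) X w
      (hw _ (by omega))
    omega
  refine ⟨fun w hww => @lt_irrefl _ ord.toPreorder w (hdec w w hww), ?_, hempty, ?_⟩
  · intro x
    exact (hfin x).subset (fun y hy => hdec x y hy)
  · intro X w hw
    exfalso
    have hsub : ∀ i : ℕ, (sig τ M X)^[i] (ind τ M X) ⊆ (pre τ)^[i] (ind τ M X) := by
      intro i
      induction i with
      | zero => exact Set.Subset.rfl
      | succ n ih =>
        rw [Function.iterate_succ_apply', Function.iterate_succ_apply']
        intro y hy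
        exact hpre_mono _ _ ih hy.1
    have hw' : w ∈ opInter (pre τ) (ind τ M X) := by
      simp only [opInter, Set.mem_iInter] at hw ⊢
      intro i hi
      exact hsub i (hw i hi)
    rw [hempty] at hw'
    exact hw'
end

section
/- Fix a linear order ≺ on the set of words over an alphabet Σ such that for every word w the set {v | v ≺ w} is finite, let τ be a binary relation on words that is input-decreasing with respect to ≺, and fix a language M. If L ⊆ M is a τ-independent language, then the language μ^*(L) = ⋃_{i≥0} μ^i(L) is τ-independent, contains L, and is P_τ-maximal relative to M. -/
open Set

theorem stmt17 {α : Type*} (ord : LinearOrder (List α))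
    (hfin : ∀ w : List α, {v : List α | ord.lt v w}.Finite)
    (τ : List α → List α → Prop)
    (hdec : ∀ x y : List α, τ x y → ord.lt y x)
    (M L : Set (List α)) (hLM : L ⊆ M) (hL : indep τ L) :
    indep τ (opStar (mu τ M) L) ∧
    L ⊆ opStar (mu τ M) L ∧
    maximalIndep τ M (opStar (mu τ M) L) := by
  classical
  letI := ord
  -- independence unfolded
  have indep_iff : ∀ Y : Set (List α), indep τ Y ↔ ∀ x ∈ Y, ∀ y ∈ Y, ¬ τ x y := by
    intro Y
    constructor
    · intro h x hx y hy hxy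
      have hmem : y ∈ img τ Y ∩ Y := ⟨⟨x, hx, hxy⟩, hy⟩
      rw [h] at hmem
      exact hmem
    · intro h
      ext y
      simp only [Set.mem_inter_iff, Set.mem_empty_iff_false, iff_false, not_and]
      rintro ⟨x, hx, hxy⟩ hy
      exact h x hx y hy hxy
  have ind_anti : ∀ X Y : Set (List α), X ⊆ Y → ind τ M Y ⊆ ind τ M X := by
    rintro X Y hXY z ⟨hzM, hz⟩
    refine ⟨hzM, ?_⟩
    rintro (⟨x, hx, hxz⟩ | ⟨x, hx, hzx⟩)
    · exact hz (Or.inl ⟨x, hXY hx, hxz⟩)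
    · exact hz (Or.inr ⟨x, hXY hx, hzx⟩)
  -- one step of μ
  have hstep : ∀ X : Set (List α), X ⊆ M → indep τ X →
      X ⊆ mu τ M X ∧ indep τ (mu τ M X) ∧ mu τ M X ⊆ M := by
    intro X hXM hX
    have hX' := (indep_iff X).mp hX
    have hXind : X ⊆ ind τ M X := by
      intro y hy
      refine ⟨hXM hy, ?_⟩
      rintro (⟨x, hx, hxy⟩ | ⟨x, hx, hyx⟩)
      · exact hX' x hx y hy hxy
      · exact hX' y hy x hx hyx
    refine ⟨?_, ?_, fun z hz => hz.1.1⟩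
    · intro y hy
      refine ⟨hXind hy, ?_⟩
      rintro ⟨x, hx, hyx⟩
      exact hx.2 (Or.inl ⟨y, hy, hyx⟩)
    · rw [indep_iff]
      rintro x hx y hy hxy
      exact hx.2 ⟨y, hy.1, hxy⟩
  -- the chain
  set C : ℕ → Set (List α) := fun i => (mu τ M)^[i] L with hCdef
  have hCsucc : ∀ i, C (i + 1) = mu τ M (C i) := by
    intro i
    simp only [hCdef, Function.iterate_succ_apply']
  have hCfacts : ∀ i, C i ⊆ M ∧ indep τ (C i) := by
    intro i
    induction i with
    | zero => exact ⟨hLM, hL⟩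
    | succ n ih =>
      obtain ⟨h1, h2, h3⟩ := hstep (C n) ih.1 ih.2
      rw [hCsucc]
      exact ⟨h3, h2⟩
  have hCstep : ∀ i, C i ⊆ C (i + 1) := by
    intro i
    rw [hCsucc]
    exact (hstep (C i) (hCfacts i).1 (hCfacts i).2).1
  have hCmono : ∀ i j, i ≤ j → C i ⊆ C j := by
    intro i j hij
    induction j with
    | zero => simp_all
    | succ n ih =>
      rcases Nat.lt_or_ge i (n + 1) with h | h
      · exact (ih (Nat.lt_succ_iff.mp h)).trans (hCstep n)
      · have : i = n + 1 := le_antisymm hij h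
        subst this
        exact subset_rfl
  have hLstar : opStar (mu τ M) L = ⋃ i, C i := rfl
  set Ls : Set (List α) := ⋃ i, C i with hLsdef
  have hmemLs : ∀ i, C i ⊆ Ls := fun i => Set.subset_iUnion C i
  have hLsM : Ls ⊆ M := by
    intro z hz
    obtain ⟨i, hi⟩ := Set.mem_iUnion.mp hz
    exact (hCfacts i).1 hi
  have hLsindep : indep τ Ls := by
    rw [indep_iff]
    intro x hx y hy hxy
    obtain ⟨i, hi⟩ := Set.mem_iUnion.mp hx
    obtain ⟨j, hj⟩ := Set.mem_iUnion.mp hy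
    have hxk : x ∈ C (max i j) := hCmono i _ (le_max_left i j) hi
    have hyk : y ∈ C (max i j) := hCmono j _ (le_max_right i j) hj
    exact (indep_iff _).mp (hCfacts (max i j)).2 x hxk y hyk hxy
  have hLLs : L ⊆ Ls := hmemLs 0
  -- the key closure lemma
  have key : ∀ n : ℕ, ∀ w : List α, (hfin w).toFinset.card = n →
      w ∈ ind τ M Ls → w ∈ Ls := by
    intro n
    induction n using Nat.strong_induction_on with
    | _ n IH =>
      intro w hcard hw
      by_cases hex : ∃ i, w ∈ mu τ M (C i)
      · obtain ⟨i, hi⟩ := hex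
        have : w ∈ C (i + 1) := by rw [hCsucc]; exact hi
        exact hmemLs (i + 1) this
      push_neg at hex
      have hpre : ∀ i, ∃ x, τ w x ∧ x ∈ ind τ M (C i) := by
        intro i
        have hwind : w ∈ ind τ M (C i) := ind_anti (C i) Ls (hmemLs i) hw
        have hwpre : w ∈ pre τ (ind τ M (C i)) := by
          by_contra hnp
          exact hex i ⟨hwind, hnp⟩
        obtain ⟨x, hx, hwx⟩ := hwpre
        exact ⟨x, hwx, hx⟩
      have hglob : ∃ x, τ w x ∧ ∀ i, x ∈ ind τ M (C i) := by
        by_contra hcon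
        push_neg at hcon
        choose f hf using hcon
        set g : List α → ℕ := fun x => if h : τ w x then f x h else 0 with hgdef
        set N : ℕ := ((hfin w).toFinset).sup g with hNdef
        obtain ⟨x, hwx, hxind⟩ := hpre N
        have hxmem : x ∈ (hfin w).toFinset := by
          rw [Set.Finite.mem_toFinset]
          exact hdec w x hwx
        have hgx : g x ≤ N := Finset.le_sup hxmem
        have hgx' : g x = f x hwx := by simp [hgdef, hwx]
        have : x ∈ ind τ M (C (f x hwx)) := by
          apply ind_anti _ _ (hCmono (f x hwx) N (hgx' ▸ hgx))
          exact hxind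
        exact hf x hwx this
      obtain ⟨x, hwx, hxall⟩ := hglob
      have hxind : x ∈ ind τ M Ls := by
        refine ⟨(hxall 0).1, ?_⟩
        rintro (⟨z, hz, hzx⟩ | ⟨z, hz, hxz⟩)
        · obtain ⟨i, hi⟩ := Set.mem_iUnion.mp hz
          exact (hxall i).2 (Or.inl ⟨z, hi, hzx⟩)
        · obtain ⟨i, hi⟩ := Set.mem_iUnion.mp hz
          exact (hxall i).2 (Or.inr ⟨z, hi, hxz⟩)
      have hxw : ord.lt x w := hdec w x hwx
      have hsub : (hfin x).toFinset ⊂ (hfin w).toFinset := by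
        rw [Finset.ssubset_iff_of_subset]
        · exact ⟨x, by rw [Set.Finite.mem_toFinset]; exact hxw,
            by rw [Set.Finite.mem_toFinset]; exact lt_irrefl x⟩
        · intro v hv
          rw [Set.Finite.mem_toFinset] at hv ⊢
          exact lt_trans hv hxw
      have hcard' : (hfin x).toFinset.card < n := by
        rw [← hcard]
        exact Finset.card_lt_card hsub
      have hxLs : x ∈ Ls := IH _ hcard' x rfl hxind
      exact absurd (Or.inr ⟨x, hxLs, hwx⟩) hw.2
  -- assemble
  rw [hLstar]
  refine ⟨hLsindep, hLLs, hLsM, hLsindep, ?_⟩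
  rintro w ⟨hwM, hwLs⟩ hind
  have hind' := (indep_iff _).mp hind
  have hwind : w ∈ ind τ M Ls := by
    refine ⟨hwM, ?_⟩
    rintro (⟨z, hz, hzw⟩ | ⟨z, hz, hwz⟩)
    · exact hind' z (Or.inl hz) w (Or.inr rfl) hzw
    · exact hind' w (Or.inr rfl) z (Or.inl hz) hwz
  exact hwLs (key _ w rfl hwind)
end

section
/- Fix a linear order ≺ on the set of words over an alphabet Σ such that for every word w the set {v | v ≺ w} is finite, let τ be a binary relation on words that is input-decreasing with respect to ≺, and let M be a finite language. If L ⊆ M is a τ-independent language, then there exists i ≥ 0 such that μ^i(L) is P_τ-maximal relative to M and contains L. -/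
open Set

theorem stmt18 {α : Type*} (ord : LinearOrder (List α))
    (hfin : ∀ w : List α, {v : List α | ord.lt v w}.Finite)
    (τ : List α → List α → Prop)
    (hdec : ∀ x y : List α, τ x y → ord.lt y x)
    (M L : Set (List α)) (hM : M.Finite) (hLM : L ⊆ M) (hL : indep τ L) :
    ∃ i : ℕ, maximalIndep τ M ((mu τ M)^[i] L) ∧ L ⊆ (mu τ M)^[i] L := by

  letI := ord
  -- basic facts about mu
  have hmuM : ∀ X, mu τ M X ⊆ M := fun X x hx => hx.1.1
  have hmu_indep : ∀ X : Set (List α), indep τ (mu τ M X) := by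
    intro X
    apply Set.eq_empty_iff_forall_notMem.2
    rintro y ⟨⟨x, hxmu, hτ⟩, hymu⟩
    exact hxmu.2 ⟨y, hymu.1, hτ⟩
  have hsub_mu : ∀ X : Set (List α), X ⊆ M → indep τ X → X ⊆ mu τ M X := by
    intro X hXM hX x hx
    have hxind : x ∈ ind τ M X := by
      refine ⟨hXM hx, ?_⟩
      rintro (⟨z, hz, hτ⟩ | ⟨z, hz, hτ⟩)
      · exact Set.eq_empty_iff_forall_notMem.1 hX x ⟨⟨z, hz, hτ⟩, hx⟩
      · exact Set.eq_empty_iff_forall_notMem.1 hX z ⟨⟨x, hx, hτ⟩, hz⟩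
    refine ⟨hxind, ?_⟩
    rintro ⟨y, hy, hτ⟩
    exact hy.2 (Or.inl ⟨x, hx, hτ⟩)
  -- a measure compatible with the order
  set c : List α → ℕ := fun w => (hfin w).toFinset.card with hc_def
  have hc : ∀ v w : List α, v < w → c v < c w := by
    intro v w hvw
    apply Finset.card_lt_card
    have hsub : (hfin v).toFinset ⊆ (hfin w).toFinset := by
      intro u hu
      rw [Set.Finite.mem_toFinset] at hu ⊢
      exact lt_trans hu hvw
    refine (Finset.ssubset_iff_of_subset hsub).2 ⟨v, ?_, ?_⟩
    · rw [Set.Finite.mem_toFinset]; exact hvw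
    · rw [Set.Finite.mem_toFinset]; exact lt_irrefl v
  -- fixed points of mu are maximal
  have hfix_max : ∀ K : Set (List α), K ⊆ M → indep τ K → mu τ M K = K →
      maximalIndep τ M K := by
    intro K hKM hK hfix
    have hindK : ∀ w, w ∈ ind τ M K → w ∈ K := by
      have key : ∀ n : ℕ, ∀ w, c w ≤ n → w ∈ ind τ M K → w ∈ K := by
        intro n
        induction n with
        | zero =>
          intro w hcw hw
          by_contra hwK
          have hwmu : w ∉ mu τ M K := by rw [hfix]; exact hwK
          have : w ∈ pre τ (ind τ M K) := by
            by_contra h; exact hwmu ⟨hw, h⟩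
          obtain ⟨y, hy, hτ⟩ := this
          exact Nat.not_lt_zero (c y) (lt_of_lt_of_le (hc y w (hdec w y hτ)) hcw)
        | succ n ih =>
          intro w hcw hw
          by_contra hwK
          have hwmu : w ∉ mu τ M K := by rw [hfix]; exact hwK
          have : w ∈ pre τ (ind τ M K) := by
            by_contra h; exact hwmu ⟨hw, h⟩
          obtain ⟨y, hy, hτ⟩ := this
          have hyK : y ∈ K := ih y (by
            have := hc y w (hdec w y hτ); omega) hy
          exact hw.2 (Or.inr ⟨y, hyK, hτ⟩)
      exact fun w hw => key (c w) w le_rfl hw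
    refine ⟨hKM, hK, ?_⟩
    rintro w ⟨hwM, hwK⟩ hind
    apply hwK
    apply hindK
    refine ⟨hwM, ?_⟩
    rintro (⟨x, hxK, hτ⟩ | ⟨y, hyK, hτ⟩)
    · have : w ∈ img τ (K ∪ {w}) ∩ (K ∪ {w}) :=
        ⟨⟨x, Or.inl hxK, hτ⟩, Or.inr rfl⟩
      rw [hind] at this; exact this
    · have : y ∈ img τ (K ∪ {w}) ∩ (K ∪ {w}) :=
        ⟨⟨w, Or.inr rfl, hτ⟩, Or.inl hyK⟩
      rw [hind] at this; exact this
  -- the chain of iterates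
  set f : ℕ → Set (List α) := fun i => (mu τ M)^[i] L with hf_def
  have hf : ∀ i, f i ⊆ M ∧ indep τ (f i) := by
    intro i
    induction i with
    | zero => exact ⟨hLM, hL⟩
    | succ i ih =>
      have : f (i + 1) = mu τ M (f i) := Function.iterate_succ_apply' _ _ _
      rw [this]
      exact ⟨hmuM _, hmu_indep _⟩
  have hmono : ∀ i, f i ⊆ f (i + 1) := by
    intro i
    have h1 : f (i + 1) = mu τ M (f i) := Function.iterate_succ_apply' _ _ _
    rw [h1]
    exact hsub_mu _ (hf i).1 (hf i).2
  have hLf : ∀ i, L ⊆ f i := by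
    intro i
    induction i with
    | zero => exact subset_rfl
    | succ i ih => exact ih.trans (hmono i)
  have hexists : ∃ i, f (i + 1) = f i := by
    by_contra h
    push_neg at h
    have hlt : ∀ i, f i ⊂ f (i + 1) := fun i =>
      ssubset_of_subset_of_ne (hmono i) (Ne.symm (h i))
    have hcard : ∀ i, i ≤ (f i).ncard := by
      intro i
      induction i with
      | zero => exact Nat.zero_le _
      | succ i ih =>
        have hfin' : (f (i + 1)).Finite := hM.subset (hf (i + 1)).1
        have := Set.ncard_lt_ncard (hlt i) hfin'
        omega
    have h1 := hcard (M.ncard + 1)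
    have h2 := Set.ncard_le_ncard (hf (M.ncard + 1)).1 hM
    omega
  obtain ⟨i, hi⟩ := hexists
  have hfixi : mu τ M (f i) = f i := by
    have h1 : f (i + 1) = mu τ M (f i) := Function.iterate_succ_apply' _ _ _
    rw [← h1]; exact hi
  exact ⟨i, hfix_max (f i) (hf i).1 (hf i).2 hfixi, hLf i⟩
end

section
/- Let the alphabet be {0,1}, let M be the set of all words over {0,1}, and let τ be the binary relation on words with τ(x,y) if and only if y is a proper prefix of x, or there exist words u, v with x = u·1·v and y = u·0·v (i.e., y is obtained from x by substituting exactly one occurrence of 1 with 0). Then for every n ≥ 0, μ^n({1}) = {1} ∪ { 0·1^k·0 | 0 ≤ k ≤ n−1 }; consequently μ^{n+1}({1}) ≠ μ^n({1}) for every n ≥ 0, so the iterated operator μ^* does not converge finitely on the language {1}. -/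
open Set

/-- The relation of Theorem 9 (`Lemma lem:ex` setting): y is a proper prefix of x, or
y results from x by substituting exactly one occurrence of 1 (true) with 0 (false). -/
def tau19 : List Bool → List Bool → Prop :=
  fun x y => (y <+: x ∧ y ≠ x) ∨
    ∃ u v : List Bool, x = u ++ true :: v ∧ y = u ++ false :: v


section Aux

def wd (k : ℕ) : List Bool := false :: (List.replicate k true ++ [false])
def pp (j : ℕ) : List Bool := false :: List.replicate j true

lemma wd_len (k : ℕ) : (wd k).length = k + 2 := by simp [wd]
lemma pp_len (j : ℕ) : (pp j).length = j + 1 := by simp [pp]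
lemma wd_eq (k : ℕ) : wd k = pp k ++ [false] := by simp [wd, pp]
lemma pp_succ (j : ℕ) : pp (j+1) = pp j ++ [true] := by
  simp [pp, List.replicate_succ']
lemma count_wd (k : ℕ) : (wd k).count true = k := by simp [wd]

lemma get_aux (n k : ℕ) (h : k < n) (l : List Bool) :
    (false :: (List.replicate n true ++ l))[k+1]'(by simp; omega) = true := by
  simp only [List.getElem_cons_succ]
  rw [List.getElem_append_left (by simpa using h)]
  simp

lemma wd_get_last (k : ℕ) : (wd k)[k+1]'(by simp [wd]) = false := by
  simp only [wd, List.getElem_cons_succ]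
  rw [List.getElem_append_right (by simp)]
  simp

lemma not_wd_prefix (k n : ℕ) (h : k < n) (l : List Bool) :
    ¬ (wd k <+: false :: (List.replicate n true ++ l)) := by
  intro hp
  have h1 : k + 1 < (wd k).length := by simp [wd]
  have := hp.getElem (i := k+1) h1
  rw [wd_get_last] at this
  rw [get_aux n k h l] at this
  exact Bool.false_ne_true this

lemma sub_length {x y u v : List Bool} (hx : x = u ++ true :: v) (hy : y = u ++ false :: v) :
    x.length = y.length := by subst hx hy; simp

lemma sub_count {x y u v : List Bool} (hx : x = u ++ true :: v) (hy : y = u ++ false :: v) :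
    x.count true = y.count true + 1 := by subst hx hy; simp [List.count_append]; ring

lemma not_tau_one_one : ¬ tau19 [true] [true] := by
  rintro (⟨-, hne⟩ | ⟨u, v, hx, hy⟩)
  · exact hne rfl
  · have := sub_count hx hy; simp at this

lemma not_tau_one_wd (k : ℕ) : ¬ tau19 [true] (wd k) := by
  rintro (⟨hp, -⟩ | ⟨u, v, hx, hy⟩)
  · have := hp.length_le; simp [wd] at this
  · have := sub_length hx hy; simp [wd] at this

lemma not_tau_wd_one (k : ℕ) : ¬ tau19 (wd k) [true] := by
  rintro (⟨hp, -⟩ | ⟨u, v, hx, hy⟩)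
  · obtain ⟨t, ht⟩ := hp
    rw [wd] at ht; exact Bool.false_ne_true (List.head_eq_of_cons_eq ht.symm)
  · have := sub_length hx hy; simp [wd] at this

lemma not_tau_wd_wd (k j : ℕ) : ¬ tau19 (wd k) (wd j) := by
  rintro (⟨hp, hne⟩ | ⟨u, v, hx, hy⟩)
  · have hlen := hp.length_le
    rw [wd_len, wd_len] at hlen
    rcases eq_or_lt_of_le (by omega : j ≤ k) with h | h
    · exact hne (hp.eq_of_length (by rw [wd_len, wd_len, h]))
    · exact not_wd_prefix j k h [false] (by rw [wd] at hp; exact hp)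
  · have h1 := sub_length hx hy
    rw [wd_len, wd_len] at h1
    have h2 := sub_count hx hy
    rw [count_wd, count_wd] at h2
    omega

def XX (n : ℕ) : Set (List Bool) := {[true]} ∪ {w | ∃ k < n, w = wd k}

lemma one_mem_X (n : ℕ) : [true] ∈ XX n := Or.inl rfl
lemma wd_mem_X {n k : ℕ} (h : k < n) : wd k ∈ XX n := Or.inr ⟨k, h, rfl⟩
lemma mem_X {n : ℕ} {w : List Bool} (h : w ∈ XX n) : w = [true] ∨ ∃ k < n, w = wd k := h

lemma one_mem_ind (n : ℕ) : [true] ∈ ind tau19 Set.univ (XX n) := by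
  refine ⟨trivial, ?_⟩
  rintro (⟨x, hx, hτ⟩ | ⟨x, hx, hτ⟩) <;> rcases mem_X hx with rfl | ⟨k, -, rfl⟩
  · exact not_tau_one_one hτ
  · exact not_tau_wd_one k hτ
  · exact not_tau_one_one hτ
  · exact not_tau_one_wd k hτ

lemma wd_mem_ind (n m : ℕ) : wd m ∈ ind tau19 Set.univ (XX n) := by
  refine ⟨trivial, ?_⟩
  rintro (⟨x, hx, hτ⟩ | ⟨x, hx, hτ⟩) <;> rcases mem_X hx with rfl | ⟨k, -, rfl⟩
  · exact not_tau_one_wd m hτ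
  · exact not_tau_wd_wd k m hτ
  · exact not_tau_wd_one m hτ
  · exact not_tau_wd_wd m k hτ

lemma tau_one_nil : tau19 [true] [] := Or.inl ⟨List.nil_prefix, by simp⟩
lemma tau_one_zero : tau19 [true] [false] := Or.inr ⟨[], [], rfl, rfl⟩
lemma tau_wd_pp (k : ℕ) : tau19 (wd k) (pp k) :=
  Or.inl ⟨⟨[false], (wd_eq k).symm⟩, fun h => by
    have := congrArg List.length h; rw [pp_len, wd_len] at this; omega⟩
lemma tau_pp_wd (n : ℕ) : tau19 (pp (n+1)) (wd n) :=
  Or.inr ⟨pp n, [], by rw [pp_succ], by rw [wd_eq]⟩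
lemma tau_ext_wd (m : ℕ) (v : List Bool) (hv : v ≠ []) : tau19 (wd m ++ v) (wd m) :=
  Or.inl ⟨⟨v, rfl⟩, fun h => by
    have := congrArg List.length h
    simp at this
    exact hv this⟩

lemma nil_notin_ind (n : ℕ) : ([] : List Bool) ∉ ind tau19 Set.univ (XX n) := by
  rintro ⟨-, h⟩
  exact h (Or.inl ⟨[true], one_mem_X n, tau_one_nil⟩)

lemma zero_notin_ind (n : ℕ) : ([false] : List Bool) ∉ ind tau19 Set.univ (XX n) := by
  rintro ⟨-, h⟩
  exact h (Or.inl ⟨[true], one_mem_X n, tau_one_zero⟩)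

lemma pp_notin_ind {n j : ℕ} (h : j ≤ n) : pp j ∉ ind tau19 Set.univ (XX n) := by
  rintro ⟨-, hind⟩
  rcases Nat.eq_zero_or_pos j with rfl | hj
  · exact hind (Or.inl ⟨[true], one_mem_X n, tau_one_zero⟩)
  · rcases lt_or_eq_of_le h with h | rfl
    · exact hind (Or.inl ⟨wd j, wd_mem_X h, tau_wd_pp j⟩)
    · obtain ⟨m, rfl⟩ := Nat.exists_eq_add_of_lt hj
      exact hind (Or.inr ⟨wd (0+m), wd_mem_X (by omega), tau_pp_wd (0+m)⟩)

lemma lead (t : List Bool) : ∃ j r, t = List.replicate j true ++ r ∧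
    (r = [] ∨ ∃ s, r = false :: s) := by
  induction t with
  | nil => exact ⟨0, [], rfl, Or.inl rfl⟩
  | cons b t ih =>
    cases b
    · exact ⟨0, false :: t, rfl, Or.inr ⟨t, rfl⟩⟩
    · obtain ⟨j, r, ht, hr⟩ := ih
      exact ⟨j+1, r, by rw [List.replicate_succ, List.cons_append, ht], hr⟩

lemma wd_sub_decomp {k : ℕ} {u v : List Bool} (h : wd k = u ++ true :: v) :
    ∃ m < k, u = pp m ∧ v = List.replicate (k-1-m) true ++ [false] := by
  cases u with
  | nil => rw [wd] at h; simp at h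
  | cons b u' =>
    rw [wd, List.cons_append] at h
    injection h with hb h'
    set m := u'.length with hm
    have hlen : k + 1 = m + (v.length + 1) := by
      have := congrArg List.length h'; simpa using this
    have hmk : m < k := by
      rcases Nat.lt_or_ge m k with h1 | h1
      · exact h1
      · exfalso
        have hv : v = [] := by
          have : v.length = 0 := by omega
          simpa using this
        subst hv
        have := (List.append_inj' h' (by simp)).2
        simp at this
    have hu' : u' = List.replicate m true := by
      have h1 : (u' ++ true :: v).take m = u' := by rw [hm]; exact List.take_left
      rw [← h', List.take_append_of_le_length (by simp; omega), List.take_replicate] at h1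
      rw [← h1, Nat.min_eq_left (by omega)]
    have hv : v = List.replicate (k-1-m) true ++ [false] := by
      have h1 : ((u' ++ [true]) ++ v).drop (m+1) = v :=
        List.drop_left' (by simp [hm])
      rw [List.append_assoc, List.singleton_append, ← h',
        List.drop_append_of_le_length (by simp; omega), List.drop_replicate] at h1
      rw [← h1]
      congr 2
      omega
    subst hb
    exact ⟨m, hmk, by rw [pp, hu'], hv⟩

lemma prefix_wd {z : List Bool} {k : ℕ} (hp : z <+: wd k) (hne : z ≠ wd k) :
    z = [] ∨ ∃ j ≤ k, z = pp j := by
  have hlen : z.length ≤ k + 2 := by simpa [wd] using hp.length_le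
  have hne' : z.length ≠ k + 2 := fun h => hne (hp.eq_of_length (by simp [wd, h]))
  have hz : z = (wd k).take z.length := List.prefix_iff_eq_take.mp hp
  cases hn : z.length with
  | zero => exact Or.inl (by simpa using hn)
  | succ j =>
    right
    refine ⟨j, by omega, ?_⟩
    rw [hz, hn, wd, List.take_cons, List.take_append_of_le_length (by simp; omega),
      List.take_replicate, Nat.min_eq_left (by omega), pp]
    all_goals simp

lemma tau_wd_Z (n t : ℕ) :
    tau19 (wd (n+t+1)) (wd n ++ (List.replicate t true ++ [false])) := by
  refine Or.inr ⟨pp n, List.replicate t true ++ [false], ?_, ?_⟩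
  · show wd (n + (t+1)) = _
    simp [wd, pp, List.replicate_add, List.replicate_succ]
  · simp [wd, pp]

lemma Z_form (n t : ℕ) : wd n ++ (List.replicate t true ++ [false]) =
    false :: (List.replicate n true ++ ([false] ++ (List.replicate t true ++ [false]))) := by
  simp [wd]

lemma Z_mem_ind (n t : ℕ) :
    wd n ++ (List.replicate t true ++ [false]) ∈ ind tau19 Set.univ (XX n) := by
  refine ⟨trivial, ?_⟩
  rintro (⟨x, hx, hτ⟩ | ⟨x, hx, hτ⟩) <;> rcases mem_X hx with rfl | ⟨k, hk, rfl⟩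
  · rcases hτ with ⟨hp, -⟩ | ⟨u, v, hx', hy'⟩
    · have := hp.length_le; simp [wd] at this
    · have h1 := congrArg List.length hx'
      have h2 := congrArg List.length hy'
      simp [wd] at h1 h2; omega
  · rcases hτ with ⟨hp, -⟩ | ⟨u, v, hx', hy'⟩
    · have := hp.length_le; simp [wd] at this; omega
    · have h1 := congrArg List.length hx'
      have h2 := congrArg List.length hy'
      simp [wd] at h1 h2; omega
  · rcases hτ with ⟨hp, -⟩ | ⟨u, v, hx', hy'⟩
    · obtain ⟨w, hw⟩ := hp
      rw [Z_form] at hw; simp at hw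
    · have h1 := congrArg List.length hx'
      have h2 := congrArg List.length hy'
      simp [wd] at h1 h2; omega
  · rcases hτ with ⟨hp, -⟩ | ⟨u, v, hx', hy'⟩
    · rw [Z_form] at hp
      exact not_wd_prefix k n hk _ hp
    · have h1 := congrArg List.length hx'
      have h2 := congrArg List.length hy'
      simp [wd] at h1 h2; omega

lemma key (n : ℕ) : mu tau19 Set.univ (XX n) = XX (n+1) := by
  ext w
  constructor
  · rintro ⟨⟨-, hw_not⟩, hw_pre⟩
    by_contra hX
    cases w with
    | nil => exact hw_not (Or.inl ⟨[true], one_mem_X n, tau_one_nil⟩)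
    | cons b t =>
      cases b
      case cons.false =>
        obtain ⟨j, r, ht, hr⟩ := lead t
        subst ht
        rcases hr with rfl | ⟨s, rfl⟩
        · rw [List.append_nil] at hw_not hw_pre hX
          cases j with
          | zero => exact hw_not (Or.inl ⟨[true], one_mem_X n, tau_one_zero⟩)
          | succ m => exact hw_pre ⟨wd m, wd_mem_ind n m, tau_pp_wd m⟩
        · have hw2 : false :: (List.replicate j true ++ false :: s) = wd j ++ s := by
            simp [wd]
          rw [hw2] at hw_not hw_pre hX
          cases s with
          | nil =>
            rw [List.append_nil] at hw_not hw_pre hX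
            rcases Nat.lt_or_ge j (n+1) with hj | hj
            · exact hX (Or.inr ⟨j, hj, rfl⟩)
            · obtain ⟨t', rfl⟩ : ∃ t', j = n + t' + 1 := ⟨j - n - 1, by omega⟩
              exact hw_pre ⟨_, Z_mem_ind n t', tau_wd_Z n t'⟩
          | cons c s' =>
            exact hw_pre ⟨wd j, wd_mem_ind n j, tau_ext_wd j (c::s') (by simp)⟩
      case cons.true =>
        cases t with
        | nil => exact hX (Or.inl rfl)
        | cons c t' =>
          exact hw_not (Or.inr ⟨[true], one_mem_X n, Or.inl ⟨⟨c::t', rfl⟩, by simp⟩⟩)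
  · intro hw
    have hind : w ∈ ind tau19 Set.univ (XX n) := by
      rcases mem_X hw with rfl | ⟨k, hk, rfl⟩
      · exact one_mem_ind n
      · exact wd_mem_ind n k
    refine ⟨hind, ?_⟩
    rintro ⟨z, hz, hτ⟩
    rcases mem_X hw with rfl | ⟨k, hk, rfl⟩
    · rcases hτ with ⟨hp, hne⟩ | ⟨u, v, hx', hy'⟩
      · have hz0 : z = [] := by
          cases z with
          | nil => rfl
          | cons a z' =>
            obtain ⟨q, hq⟩ := hp
            rw [List.cons_append] at hq
            injection hq with h1 h2
            simp at h2
            exact absurd (by rw [h1, h2.1]) hne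
        subst hz0
        exact nil_notin_ind n hz
      · have hu : u = [] := by
          cases u with
          | nil => rfl
          | cons a u' =>
            rw [List.cons_append] at hx'
            injection hx' with h1 h2
            simp at h2
        subst hu
        rw [List.nil_append] at hx' hy'
        injection hx' with h1 h2
        subst h2
        rw [hy'] at hz
        exact zero_notin_ind n hz
    · rcases hτ with ⟨hp, hne⟩ | ⟨u, v, hx', hy'⟩
      · rcases prefix_wd hp hne with rfl | ⟨j, hj, rfl⟩
        · exact nil_notin_ind n hz
        · exact pp_notin_ind (by omega) hz
      · obtain ⟨m, hm, rfl, rfl⟩ := wd_sub_decomp hx'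
        rcases hz with ⟨-, hind2⟩
        refine hind2 (Or.inr ⟨wd m, wd_mem_X (by omega), ?_⟩)
        rw [hy']
        have heq : pp m ++ false :: (List.replicate (k-1-m) true ++ [false]) =
            wd m ++ (List.replicate (k-1-m) true ++ [false]) := by simp [wd, pp]
        rw [heq]
        exact tau_ext_wd m _ (by simp)

lemma main_eq (n : ℕ) : (mu tau19 Set.univ)^[n] {[true]} = XX n := by
  induction n with
  | zero =>
    simp only [Function.iterate_zero_apply]
    ext w; simp [XX]
  | succ n ih => rw [Function.iterate_succ_apply', ih, key n]

lemma wd_notin_X (n : ℕ) : wd n ∉ XX n := by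
  rintro (h | ⟨k, hk, h⟩)
  · have := congrArg List.length h; simp [wd] at this
  · have := congrArg List.length h; simp [wd] at this; omega

end Aux

theorem stmt19 :
    (∀ n : ℕ, (mu tau19 Set.univ)^[n] {[true]} =
      {[true]} ∪ {w : List Bool | ∃ k < n, w = false :: (List.replicate k true ++ [false])}) ∧
    (∀ n : ℕ, (mu tau19 Set.univ)^[n+1] {[true]} ≠ (mu tau19 Set.univ)^[n] {[true]}) := by
  constructor
  · intro n
    rw [main_eq n]
    rfl
  · intro n h
    rw [main_eq (n+1), main_eq n] at h
    have h1 : wd n ∈ XX n := h ▸ wd_mem_X (Nat.lt_succ_self n)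
    exact wd_notin_X n h1
end
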